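/- Let B be a nondegenerate symmetric bilinear form on ℂⁿ with n = 2m even. Consider the set of m-dimensional totally isotropic subspaces U ⊆ ℂⁿ (i.e., B(u,v) = 0 for all u, v ∈ U), and the equivalence relation U ~ U' given by the existence of an isometry g of B with det g = 1 and g(U) = U'. Then this relation has exactly two equivalence classes. (Thus the O(n)-orbit Q(n/2) on Gr(n/2, n) is a union of two closed SO(n)-orbits.) -/

import Mathlib

open Module Matrix Sum LinearMap

namespace TwoFamAux

noncomputable section

variable (m : ℕ)

abbrev Wt (m : ℕ) := (Fin m ⊕ Fin m) → ℂ

def Jm (m : ℕ) : Matrix (Fin m ⊕ Fin m) (Fin m ⊕ Fin m) ℂ :=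
  Matrix.fromBlocks 0 1 1 0

@[simp] lemma Jm_ll (a b : Fin m) : Jm m (inl a) (inl b) = 0 := rfl
@[simp] lemma Jm_lr (a b : Fin m) : Jm m (inl a) (inr b) = if a = b then 1 else 0 := by
  simp [Jm, Matrix.one_apply]
@[simp] lemma Jm_rl (a b : Fin m) : Jm m (inr a) (inl b) = if a = b then 1 else 0 := by
  simp [Jm, Matrix.one_apply]
@[simp] lemma Jm_rr (a b : Fin m) : Jm m (inr a) (inr b) = 0 := rfl

lemma Jm_transpose : (Jm m)ᵀ = Jm m := by
  simp [Jm, Matrix.fromBlocks_transpose]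

lemma Jm_mul_Jm : Jm m * Jm m = 1 := by
  rw [Jm, Matrix.fromBlocks_multiply]
  simpa using Matrix.fromBlocks_one

lemma Jm_det_ne_zero : (Jm m).det ≠ 0 := by
  have h : (Jm m).det * (Jm m).det = 1 := by
    rw [← Matrix.det_mul, Jm_mul_Jm, Matrix.det_one]
  intro h0; rw [h0, zero_mul] at h; exact zero_ne_one h

def Bh (m : ℕ) : LinearMap.BilinForm ℂ (Wt m) := Matrix.toBilin' (Jm m)

lemma gram_entry {κ : Type*} [Fintype κ] [DecidableEq κ] (M G : Matrix κ κ ℂ) (a b : κ) :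
    (Gᵀ * M * G) a b = Matrix.toBilin' M (fun i => G i a) (fun i => G i b) := by
  rw [Matrix.toBilin'_apply]
  simp only [Matrix.mul_apply, Matrix.transpose_apply, Finset.sum_mul]
  rw [Finset.sum_comm]

lemma toBilin'_symm_apply {κ : Type*} [Fintype κ] [DecidableEq κ] {M : Matrix κ κ ℂ}
    (hM : Mᵀ = M) (x y : κ → ℂ) : Matrix.toBilin' M x y = Matrix.toBilin' M y x := by
  rw [Matrix.toBilin'_apply, Matrix.toBilin'_apply, Finset.sum_comm]
  refine Finset.sum_congr rfl fun i _ => Finset.sum_congr rfl fun j _ => ?_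
  have h : M j i = M i j := by rw [← Matrix.transpose_apply M i j, hM]
  rw [h]; ring

lemma Bh_symm (x y : Wt m) : Bh m x y = Bh m y x :=
  toBilin'_symm_apply (Jm_transpose m) x y

lemma Bh_nondegenerate : (Bh m).Nondegenerate :=
  (Matrix.nondegenerate_of_det_ne_zero (Jm_det_ne_zero m)).toBilin'

lemma isotropic_span {V : Type*} [AddCommGroup V] [Module ℂ V] (B : LinearMap.BilinForm ℂ V)
    {s : Set V} (h : ∀ x ∈ s, ∀ y ∈ s, B x y = 0) :
    ∀ u ∈ Submodule.span ℂ s, ∀ v ∈ Submodule.span ℂ s, B u v = 0 := by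
  intro u hu v hv
  have h1 : ∀ x ∈ s, B x v = 0 := by
    intro x hx
    have : Submodule.span ℂ s ≤ LinearMap.ker (B x) :=
      Submodule.span_le.2 fun y hy => by simpa using h x hx y hy
    simpa using this hv
  have h2 : Submodule.span ℂ s ≤ LinearMap.ker (B.flip v) :=
    Submodule.span_le.2 fun x hx => by simpa using h1 x hx
  simpa using h2 hu

def U1 (m : ℕ) : Submodule ℂ (Wt m) :=
  Submodule.span ℂ (Set.range fun j : Fin m => Pi.single (inl j) (1 : ℂ))

lemma single_linearIndependent :
    LinearIndependent ℂ (fun k : Fin m ⊕ Fin m => (Pi.single k 1 : Wt m)) := by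
  have h0 : (fun k : Fin m ⊕ Fin m => (Pi.single k (1:ℂ) : Wt m))
      = ⇑(Pi.basisFun ℂ (Fin m ⊕ Fin m)) := by
    funext k; simp [Pi.basisFun_apply]
  rw [h0]; exact (Pi.basisFun ℂ _).linearIndependent

lemma mem_U1 {x : Wt m} : x ∈ U1 m ↔ ∀ j, x (inr j) = 0 := by
  constructor
  · intro hx
    rw [U1, Submodule.mem_span_range_iff_exists_fun] at hx
    obtain ⟨c, hc⟩ := hx
    intro j
    rw [← hc]
    simp [Finset.sum_apply, Pi.single_apply]
  · intro hx
    rw [U1, Submodule.mem_span_range_iff_exists_fun]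
    refine ⟨fun j => x (inl j), funext fun k => ?_⟩
    match k with
    | Sum.inl a => simp [Finset.sum_apply, Pi.single_apply]
    | Sum.inr a => simp [Finset.sum_apply, Pi.single_apply, hx a]

lemma finrank_U1 : finrank ℂ (U1 m) = m := by
  have li : LinearIndependent ℂ (fun j : Fin m => (Pi.single (inl j) 1 : Wt m)) :=
    (single_linearIndependent m).comp inl inl_injective
  rw [U1, finrank_span_eq_card li, Fintype.card_fin]

lemma U1_isotropic : ∀ u ∈ U1 m, ∀ v ∈ U1 m, Bh m u v = 0 := by
  intro u hu v hv
  refine isotropic_span (Bh m) ?_ u hu v hv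
  rintro _ ⟨a, rfl⟩ _ ⟨b, rfl⟩
  simp [Bh, Matrix.toBilin'_single]

lemma toLin'_single {κ : Type*} [Fintype κ] [DecidableEq κ] (G : Matrix κ κ ℂ) (k : κ) :
    Matrix.toLin' G (Pi.single k 1) = fun i => G i k := by
  funext i
  simp [Matrix.toLin'_apply, Matrix.mulVec, dotProduct, Pi.single_apply]

lemma iso_of_gram {G : Matrix (Fin m ⊕ Fin m) (Fin m ⊕ Fin m) ℂ}
    (hG : Gᵀ * Jm m * G = Jm m) (x y : Wt m) :
    Bh m (Matrix.toLin' G x) (Matrix.toLin' G y) = Bh m x y := by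
  have h : (Bh m).comp (Matrix.toLin' G) (Matrix.toLin' G) = Bh m := by
    rw [Bh, Matrix.toBilin'_comp, hG]
  have h2 := LinearMap.congr_fun (LinearMap.congr_fun h x) y
  simpa [LinearMap.BilinForm.comp_apply] using h2

lemma gram_of_iso (g : Wt m ≃ₗ[ℂ] Wt m) (h : ∀ x y, Bh m (g x) (g y) = Bh m x y) :
    (LinearMap.toMatrix' (g : Wt m →ₗ[ℂ] Wt m))ᵀ * Jm m
      * LinearMap.toMatrix' (g : Wt m →ₗ[ℂ] Wt m) = Jm m := by
  have hc : (Bh m).comp (g : Wt m →ₗ[ℂ] Wt m) (g : Wt m →ₗ[ℂ] Wt m) = Bh m := by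
    refine LinearMap.ext fun x => LinearMap.ext fun y => ?_
    simpa [LinearMap.BilinForm.comp_apply] using h x y
  have := congrArg LinearMap.BilinForm.toMatrix' hc
  rwa [LinearMap.BilinForm.toMatrix'_comp, Bh, LinearMap.BilinForm.toMatrix'_toBilin'] at this

lemma det_sq_of_gram {G : Matrix (Fin m ⊕ Fin m) (Fin m ⊕ Fin m) ℂ}
    (hG : Gᵀ * Jm m * G = Jm m) : G.det * G.det = 1 := by
  have h1 := congrArg Matrix.det hG
  rw [Matrix.det_mul, Matrix.det_mul, Matrix.det_transpose] at h1
  have h2 : G.det * G.det * (Jm m).det = 1 * (Jm m).det := by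
    rw [one_mul]; linear_combination h1
  simpa using mul_right_cancel₀ (Jm_det_ne_zero m) h2

def invertible_of_gram {G : Matrix (Fin m ⊕ Fin m) (Fin m ⊕ Fin m) ℂ}
    (hG : Gᵀ * Jm m * G = Jm m) : Invertible G :=
  G.invertibleOfIsUnitDet (IsUnit.of_mul_eq_one _ (det_sq_of_gram m hG))

/-- The determinant-one stabilizer lemma. -/
lemma det_one_of_stab (g : Wt m ≃ₗ[ℂ] Wt m) (hiso : ∀ x y, Bh m (g x) (g y) = Bh m x y)
    (hstab : ∀ x ∈ U1 m, g x ∈ U1 m) :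
    LinearMap.det (g : Wt m →ₗ[ℂ] Wt m) = 1 := by
  set G := LinearMap.toMatrix' (g : Wt m →ₗ[ℂ] Wt m) with hGdef
  have hG : Gᵀ * Jm m * G = Jm m := gram_of_iso m g hiso
  have happ : ∀ x, g x = Matrix.toLin' G x := by
    intro x
    rw [hGdef, Matrix.toLin'_toMatrix']
    rfl
  have hzero : G.toBlocks₂₁ = 0 := by
    ext i j
    have h1 : (Pi.single (inl j) 1 : Wt m) ∈ U1 m := by
      rw [mem_U1]; intro a; simp [Pi.single_apply]
    have h2 := hstab _ h1
    rw [happ, toLin'_single] at h2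
    have := (mem_U1 m).1 h2 i
    simpa [Matrix.toBlocks₂₁] using this
  have hGblocks : G = Matrix.fromBlocks G.toBlocks₁₁ G.toBlocks₁₂ 0 G.toBlocks₂₂ := by
    conv_lhs => rw [← Matrix.fromBlocks_toBlocks G]
    rw [hzero]
  set A := G.toBlocks₁₁
  set X := G.toBlocks₁₂
  set C := G.toBlocks₂₂
  have hblockmul : Gᵀ * Jm m * G =
      Matrix.fromBlocks 0 (Aᵀ * C) (Cᵀ * A) (Cᵀ * X + Xᵀ * C) := by
    rw [hGblocks, Jm, Matrix.fromBlocks_transpose, Matrix.fromBlocks_multiply,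
      Matrix.fromBlocks_multiply]
    congr 1 <;> simp
  have h12 : Aᵀ * C = 1 := by
    have h := hblockmul.symm.trans hG
    have h2 := congrArg Matrix.toBlocks₁₂ h
    simpa [Jm, Matrix.toBlocks_fromBlocks₁₂] using h2
  have hdet : G.det = 1 := by
    rw [hGblocks, Matrix.det_fromBlocks_zero₂₁]
    have h3 := congrArg Matrix.det h12
    rwa [Matrix.det_mul, Matrix.det_transpose, Matrix.det_one] at h3
  rw [← LinearMap.det_toMatrix' (g : Wt m →ₗ[ℂ] Wt m), ← hGdef, hdet]

variable (i0 : Fin m)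

def tau (i0 : Fin m) : Equiv.Perm (Fin m ⊕ Fin m) := Equiv.swap (inl i0) (inr i0)

lemma tau_tau (k : Fin m ⊕ Fin m) : tau m i0 (tau m i0 k) = k := by
  simp [tau, Equiv.swap_apply_self]

lemma tau_inl (x : Fin m) : tau m i0 (inl x) = if x = i0 then inr i0 else inl x := by
  rcases eq_or_ne x i0 with h | h <;> simp [tau, Equiv.swap_apply_def, h]

lemma tau_inr (x : Fin m) : tau m i0 (inr x) = if x = i0 then inl i0 else inr x := by
  rcases eq_or_ne x i0 with h | h <;> simp [tau, Equiv.swap_apply_def, h]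

def Pσ (i0 : Fin m) : Matrix (Fin m ⊕ Fin m) (Fin m ⊕ Fin m) ℂ := (tau m i0).permMatrix ℂ

lemma Pσ_apply (i k : Fin m ⊕ Fin m) :
    Pσ m i0 i k = if i = tau m i0 k then 1 else 0 := by
  have hiff : (k = tau m i0 i) ↔ (i = tau m i0 k) := by
    constructor <;> intro h <;> subst h <;> rw [tau_tau]
  simp only [Pσ, Equiv.Perm.permMatrix, PEquiv.toMatrix_apply, Equiv.toPEquiv_apply,
    Option.mem_def, Option.some.injEq]
  simp [hiff, eq_comm]

lemma Jm_tau (a b : Fin m ⊕ Fin m) : Jm m (tau m i0 a) (tau m i0 b) = Jm m a b := by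
  rcases a with a | a <;> rcases b with b | b <;>
    rcases eq_or_ne a i0 with h1 | h1 <;> rcases eq_or_ne b i0 with h2 | h2 <;>
    simp [tau_inl, tau_inr, h1, h2, eq_comm] <;>
    exact Ne.symm h2

lemma Pσ_col (a : Fin m ⊕ Fin m) :
    (fun i => Pσ m i0 i a) = (Pi.single (tau m i0 a) 1 : Wt m) := by
  funext i; simp [Pσ_apply, Pi.single_apply]

lemma Pσ_gram : (Pσ m i0)ᵀ * Jm m * Pσ m i0 = Jm m := by
  ext a b
  rw [gram_entry, Pσ_col, Pσ_col, Matrix.toBilin'_single, Jm_tau]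

lemma Pσ_det : (Pσ m i0).det = -1 := by
  rw [Pσ, Matrix.det_permutation, tau, Equiv.Perm.sign_swap (by simp)]
  simp

def sigmaE (i0 : Fin m) : Wt m ≃ₗ[ℂ] Wt m :=
  (Pσ m i0).toLinearEquiv' (invertible_of_gram m (Pσ_gram m i0))

lemma sigmaE_coe : (sigmaE m i0 : Wt m →ₗ[ℂ] Wt m) = Matrix.toLin' (Pσ m i0) :=
  Matrix.toLinearEquiv'_apply _ _

lemma sigmaE_apply (x : Wt m) : sigmaE m i0 x = Matrix.toLin' (Pσ m i0) x := by
  rw [← sigmaE_coe]; rfl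

lemma sigmaE_iso (x y : Wt m) : Bh m (sigmaE m i0 x) (sigmaE m i0 y) = Bh m x y := by
  rw [sigmaE_apply, sigmaE_apply]; exact iso_of_gram m (Pσ_gram m i0) x y

lemma sigmaE_det : LinearMap.det (sigmaE m i0 : Wt m →ₗ[ℂ] Wt m) = -1 := by
  rw [sigmaE_coe, LinearMap.det_toLin', Pσ_det]

lemma sigmaE_single (k : Fin m ⊕ Fin m) :
    sigmaE m i0 (Pi.single k 1) = Pi.single (tau m i0 k) 1 := by
  rw [sigmaE_apply, toLin'_single, ← Pσ_col]

lemma map_span_range {V V' : Type*} [AddCommGroup V] [Module ℂ V] [AddCommGroup V'] [Module ℂ V']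
    (f : V →ₗ[ℂ] V') {κ : Type*} (v : κ → V) :
    Submodule.map f (Submodule.span ℂ (Set.range v)) = Submodule.span ℂ (Set.range (f ∘ v)) := by
  rw [Submodule.map_span, ← Set.range_comp]

def U2 (i0 : Fin m) : Submodule ℂ (Wt m) :=
  Submodule.map (sigmaE m i0 : Wt m →ₗ[ℂ] Wt m) (U1 m)

lemma map_sigmaE_single_span (v : Fin m → Fin m ⊕ Fin m) :
    Submodule.map (sigmaE m i0 : Wt m →ₗ[ℂ] Wt m)
      (Submodule.span ℂ (Set.range fun j => (Pi.single (v j) 1 : Wt m)))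
      = Submodule.span ℂ (Set.range fun j => (Pi.single (tau m i0 (v j)) 1 : Wt m)) := by
  rw [map_span_range]
  have hf : ((sigmaE m i0 : Wt m →ₗ[ℂ] Wt m) ∘ fun j => (Pi.single (v j) 1 : Wt m))
      = fun j => (Pi.single (tau m i0 (v j)) 1 : Wt m) := by
    funext j
    simp only [Function.comp_apply, LinearEquiv.coe_coe]
    rw [sigmaE_single]
  rw [hf]

lemma U2_eq : U2 m i0
    = Submodule.span ℂ (Set.range fun j => (Pi.single (tau m i0 (inl j)) 1 : Wt m)) := by
  rw [U2, U1, map_sigmaE_single_span]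

lemma map_sigmaE_U2 : Submodule.map (sigmaE m i0 : Wt m →ₗ[ℂ] Wt m) (U2 m i0) = U1 m := by
  rw [U2_eq, map_sigmaE_single_span, U1]
  have hf : (fun j : Fin m => (Pi.single (tau m i0 (tau m i0 (inl j))) 1 : Wt m))
      = fun j : Fin m => (Pi.single (inl j) 1 : Wt m) := by
    funext j; rw [tau_tau]
  rw [hf]

lemma witt (U : Submodule ℂ (Wt m)) (hr : finrank ℂ U = m)
    (hU : ∀ u ∈ U, ∀ v ∈ U, Bh m u v = 0) :
    ∃ G : Matrix (Fin m ⊕ Fin m) (Fin m ⊕ Fin m) ℂ, Gᵀ * Jm m * G = Jm m ∧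
      Submodule.map (Matrix.toLin' G) (U1 m) = U := by
  classical
  have hnd := Bh_nondegenerate m
  let u : Basis (Fin m) ℂ U := (Module.finBasis ℂ U).reindex (finCongr hr)
  let uv : Fin m → Wt m := fun j => (u j : Wt m)
  have huvU : ∀ j, uv j ∈ U := fun j => (u j).2
  have luv : LinearIndependent ℂ uv :=
    u.linearIndependent.map' U.subtype (Submodule.ker_subtype U)
  have hs : LinearIndepOn ℂ id (Set.range uv) := luv.linearIndepOn_id
  let bext : Basis _ ℂ (Wt m) := Basis.extend hs
  have hsub : Set.range uv ⊆ hs.extend (Set.subset_univ _) := hs.subset_extend _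
  let idx : Fin m → hs.extend (Set.subset_univ _) := fun j => ⟨uv j, hsub ⟨j, rfl⟩⟩
  have hbext : ∀ j, bext (idx j) = uv j := fun j => Basis.extend_apply_self hs (idx j)
  have hidx_inj : Function.Injective idx := by
    intro a b hab
    exact luv.injective (by simpa [idx, Subtype.ext_iff] using hab)
  let w : Fin m → Wt m := fun j => (Bh m).dualBasis hnd bext (idx j)
  have hw : ∀ j i, Bh m (w j) (uv i) = if i = j then 1 else 0 := by
    intro j i
    have h := LinearMap.BilinForm.apply_dualBasis_left (B := Bh m) hnd bext (idx j) (idx i)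
    rw [hbext] at h
    rw [show w j = (Bh m).dualBasis hnd bext (idx j) from rfl, h]
    by_cases hij : i = j
    · simp [hij]
    · rw [if_neg hij, if_neg (fun hc => hij (hidx_inj hc))]
  have hw' : ∀ i j, Bh m (uv i) (w j) = if i = j then 1 else 0 := fun i j => by
    rw [Bh_symm]; exact hw j i
  have huu : ∀ i k, Bh m (uv i) (uv k) = 0 := fun i k => hU _ (huvU i) _ (huvU k)
  let f : Fin m → Wt m := fun j => w j - (2⁻¹ : ℂ) • ∑ k, (Bh m (w j) (w k)) • uv k
  have hBxf : ∀ (x : Wt m) (j : Fin m), Bh m x (f j)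
      = Bh m x (w j) - 2⁻¹ * ∑ k, Bh m (w j) (w k) * Bh m x (uv k) := by
    intro x j
    rw [show f j = w j - (2⁻¹ : ℂ) • ∑ k, (Bh m (w j) (w k)) • uv k from rfl]
    rw [map_sub, _root_.map_smul, map_sum]
    simp only [_root_.map_smul, smul_eq_mul]
  have hBuf : ∀ i j, Bh m (uv i) (f j) = if i = j then 1 else 0 := by
    intro i j
    rw [hBxf, hw' i j]
    simp [huu]
  have hBff : ∀ i j, Bh m (f i) (f j) = 0 := by
    intro i j
    have e1 : Bh m (f i) (w j) = Bh m (w j) (w i) - 2⁻¹ * Bh m (w i) (w j) := by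
      rw [Bh_symm m (f i) (w j), hBxf (w j) i]
      congr 1
      have hx : ∀ k, Bh m (w j) (uv k) = if k = j then 1 else 0 := fun k => hw j k
      have hsum : (∑ k, Bh m (w i) (w k) * Bh m (w j) (uv k)) = Bh m (w i) (w j) := by
        simp [hx, mul_ite]
      rw [hsum]
    have e2 : ∀ k, Bh m (f i) (uv k) = if k = i then 1 else 0 := by
      intro k; rw [Bh_symm]; exact hBuf k i
    rw [hBxf (f i) j, e1]
    have hsum2 : (∑ k, Bh m (w j) (w k) * Bh m (f i) (uv k)) = Bh m (w j) (w i) := by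
      simp [e2, mul_ite]
    rw [hsum2, Bh_symm m (w i) (w j)]
    ring
  let c : (Fin m ⊕ Fin m) → Wt m := Sum.elim uv f
  let G : Matrix (Fin m ⊕ Fin m) (Fin m ⊕ Fin m) ℂ := Matrix.of fun i k => c k i
  have hGram : Gᵀ * Jm m * G = Jm m := by
    ext a b
    rw [gram_entry]
    show Bh m (c a) (c b) = Jm m a b
    rcases a with a | a <;> rcases b with b | b
    · simpa [c] using huu a b
    · simpa [c] using hBuf a b
    · rw [show Bh m (c (inr a)) (c (inl b)) = Bh m (c (inl b)) (c (inr a)) from Bh_symm m _ _]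
      simp only [c, Sum.elim_inl, Sum.elim_inr, Jm_rl]
      rw [hBuf b a]
      simp [eq_comm]
    · simpa [c] using hBff a b
  refine ⟨G, hGram, ?_⟩
  rw [U1, map_span_range]
  have hcomp : (Matrix.toLin' G ∘ fun j : Fin m => (Pi.single (inl j) 1 : Wt m)) = uv := by
    funext j
    rw [Function.comp_apply, toLin'_single]
    rfl
  rw [hcomp]
  have hruv : Set.range uv = (U.subtype) '' Set.range u := by
    rw [← Set.range_comp]; rfl
  rw [hruv, Submodule.span_image, u.span_eq, Submodule.map_subtype_top]

def Good {V : Type*} [AddCommGroup V] [Module ℂ V] (B : LinearMap.BilinForm ℂ V)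
    (U U' : Submodule ℂ V) : Prop :=
  ∃ g : V ≃ₗ[ℂ] V, (∀ v w, B (g v) (g w) = B v w) ∧
    LinearMap.det (g : V →ₗ[ℂ] V) = 1 ∧ Submodule.map (g : V →ₗ[ℂ] V) U = U'

def Ok (m : ℕ) {V : Type*} [AddCommGroup V] [Module ℂ V] (B : LinearMap.BilinForm ℂ V) : Prop :=
  ∃ U₁ U₂ : Submodule ℂ V,
    (finrank ℂ U₁ = m ∧ ∀ u ∈ U₁, ∀ v ∈ U₁, B u v = 0) ∧
    (finrank ℂ U₂ = m ∧ ∀ u ∈ U₂, ∀ v ∈ U₂, B u v = 0) ∧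
    ¬ Good B U₁ U₂ ∧
    ∀ U : Submodule ℂ V, (finrank ℂ U = m ∧ ∀ u ∈ U, ∀ v ∈ U, B u v = 0) →
      Good B U U₁ ∨ Good B U U₂

lemma map_symm_map {V V' : Type*} [AddCommGroup V] [Module ℂ V] [AddCommGroup V'] [Module ℂ V']
    (h : V ≃ₗ[ℂ] V') (p : Submodule ℂ V) :
    Submodule.map (h.symm : V' →ₗ[ℂ] V) (Submodule.map (h : V →ₗ[ℂ] V') p) = p := by
  rw [← Submodule.map_comp]
  have he : ((h.symm : V' →ₗ[ℂ] V) ∘ₗ (h : V →ₗ[ℂ] V')) = LinearMap.id := by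
    ext x; simp
  rw [he, Submodule.map_id]

lemma det_symm_one {V : Type*} [AddCommGroup V] [Module ℂ V] (h : V ≃ₗ[ℂ] V)
    (hd : LinearMap.det (h : V →ₗ[ℂ] V) = 1) :
    LinearMap.det (h.symm : V →ₗ[ℂ] V) = 1 := by
  have he : ((h.symm : V →ₗ[ℂ] V) ∘ₗ (h : V →ₗ[ℂ] V)) = LinearMap.id := by
    ext x; simp
  have h2 := congrArg LinearMap.det he
  rwa [LinearMap.det_comp, hd, mul_one, LinearMap.det_id] at h2

lemma good_symm {V : Type*} [AddCommGroup V] [Module ℂ V] (B : LinearMap.BilinForm ℂ V)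
    {U U' : Submodule ℂ V} (h : V ≃ₗ[ℂ] V) (hi : ∀ x y, B (h x) (h y) = B x y)
    (hd : LinearMap.det (h : V →ₗ[ℂ] V) = 1)
    (hmap : Submodule.map (h : V →ₗ[ℂ] V) U' = U) : Good B U U' := by
  refine ⟨h.symm, fun x y => ?_, det_symm_one h hd, ?_⟩
  · have := hi (h.symm x) (h.symm y)
    rw [LinearEquiv.apply_symm_apply, LinearEquiv.apply_symm_apply] at this
    exact this.symm
  · rw [← hmap, map_symm_map]

/-- The core theorem for the standard hyperbolic form. -/
theorem core (hm : 0 < m) : Ok m (Bh m) := by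
  have i0 : Fin m := ⟨0, hm⟩
  refine ⟨U1 m, U2 m i0, ⟨finrank_U1 m, U1_isotropic m⟩, ⟨?_, ?_⟩, ?_, ?_⟩
  · rw [U2, LinearEquiv.finrank_map_eq, finrank_U1]
  · rintro _ ⟨x, hx, rfl⟩ _ ⟨y, hy, rfl⟩
    simp only [LinearEquiv.coe_coe]
    rw [sigmaE_iso]
    exact U1_isotropic m x hx y hy
  · rintro ⟨g, hgi, hgd, hgm⟩
    have hstab : ∀ x ∈ U1 m, (g.trans (sigmaE m i0)) x ∈ U1 m := by
      intro x hx
      have h1 : g x ∈ U2 m i0 := by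
        rw [← hgm]; exact Submodule.mem_map_of_mem hx
      have h2 : sigmaE m i0 (g x) ∈ Submodule.map (sigmaE m i0 : Wt m →ₗ[ℂ] Wt m) (U2 m i0) :=
        Submodule.mem_map_of_mem h1
      rwa [map_sigmaE_U2] at h2
    have hiso : ∀ x y, Bh m ((g.trans (sigmaE m i0)) x) ((g.trans (sigmaE m i0)) y)
        = Bh m x y := by
      intro x y
      rw [LinearEquiv.trans_apply, LinearEquiv.trans_apply, sigmaE_iso]
      exact hgi x y
    have hdet := det_one_of_stab m (g.trans (sigmaE m i0)) hiso hstab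
    rw [show ((g.trans (sigmaE m i0)) : Wt m →ₗ[ℂ] Wt m)
        = (sigmaE m i0 : Wt m →ₗ[ℂ] Wt m) ∘ₗ (g : Wt m →ₗ[ℂ] Wt m)
        from LinearEquiv.coe_trans] at hdet
    rw [LinearMap.det_comp, sigmaE_det, hgd, mul_one] at hdet
    norm_num at hdet
  · intro U hU
    obtain ⟨G, hGram, hmapG⟩ := witt m U hU.1 hU.2
    have hinv : Invertible G := invertible_of_gram m hGram
    let ge : Wt m ≃ₗ[ℂ] Wt m := G.toLinearEquiv' hinv
    have hge_coe : (ge : Wt m →ₗ[ℂ] Wt m) = Matrix.toLin' G :=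
      Matrix.toLinearEquiv'_apply _ _
    have hge_iso : ∀ x y, Bh m (ge x) (ge y) = Bh m x y := by
      intro x y
      have : ge x = Matrix.toLin' G x := by rw [← hge_coe]; rfl
      rw [this, show ge y = Matrix.toLin' G y from by rw [← hge_coe]; rfl]
      exact iso_of_gram m hGram x y
    have hge_det : LinearMap.det (ge : Wt m →ₗ[ℂ] Wt m) = G.det := by
      rw [hge_coe, LinearMap.det_toLin']
    have hge_map : Submodule.map (ge : Wt m →ₗ[ℂ] Wt m) (U1 m) = U := by
      rw [hge_coe]; exact hmapG
    rcases mul_self_eq_one_iff.1 (det_sq_of_gram m hGram) with hdet | hdet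
    · left
      exact good_symm (Bh m) ge hge_iso (by rw [hge_det, hdet]) hge_map
    · right
      refine good_symm (Bh m) ((sigmaE m i0).trans ge) ?_ ?_ ?_
      · intro x y
        rw [LinearEquiv.trans_apply, LinearEquiv.trans_apply, hge_iso, sigmaE_iso]
      · rw [show (((sigmaE m i0).trans ge) : Wt m →ₗ[ℂ] Wt m)
            = (ge : Wt m →ₗ[ℂ] Wt m) ∘ₗ (sigmaE m i0 : Wt m →ₗ[ℂ] Wt m)
            from LinearEquiv.coe_trans]
        rw [LinearMap.det_comp, hge_det, hdet, sigmaE_det]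
        norm_num
      · rw [show (((sigmaE m i0).trans ge) : Wt m →ₗ[ℂ] Wt m)
            = (ge : Wt m →ₗ[ℂ] Wt m) ∘ₗ (sigmaE m i0 : Wt m →ₗ[ℂ] Wt m)
            from LinearEquiv.coe_trans]
        rw [Submodule.map_comp, map_sigmaE_U2, hge_map]

section Transport

variable {V V' : Type*} [AddCommGroup V] [Module ℂ V] [AddCommGroup V'] [Module ℂ V']
variable (B : LinearMap.BilinForm ℂ V) (B' : LinearMap.BilinForm ℂ V')
variable (phi : V' ≃ₗ[ℂ] V)

lemma good_congr (hphi : ∀ x y, B (phi x) (phi y) = B' x y) {U U' : Submodule ℂ V'}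
    (h : Good B' U U') :
    Good B (Submodule.map (phi : V' →ₗ[ℂ] V) U) (Submodule.map (phi : V' →ₗ[ℂ] V) U') := by
  obtain ⟨g, hgi, hgd, hgm⟩ := h
  refine ⟨phi.symm.trans (g.trans phi), fun x y => ?_, ?_, ?_⟩
  · simp only [LinearEquiv.trans_apply]
    rw [hphi, hgi, ← hphi, LinearEquiv.apply_symm_apply, LinearEquiv.apply_symm_apply]
  · have hcoe : ((phi.symm.trans (g.trans phi)) : V →ₗ[ℂ] V)
        = (phi : V' →ₗ[ℂ] V) ∘ₗ ((g : V' →ₗ[ℂ] V') ∘ₗ (phi.symm : V →ₗ[ℂ] V')) := by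
      rw [LinearEquiv.coe_trans, LinearEquiv.coe_trans, LinearMap.comp_assoc]
    rw [hcoe, LinearMap.det_conj, hgd]
  · have hcoe : ((phi.symm.trans (g.trans phi)) : V →ₗ[ℂ] V)
        = ((phi : V' →ₗ[ℂ] V) ∘ₗ (g : V' →ₗ[ℂ] V')) ∘ₗ (phi.symm : V →ₗ[ℂ] V') := by
      rw [LinearEquiv.coe_trans, LinearEquiv.coe_trans]
    rw [hcoe, Submodule.map_comp, map_symm_map, Submodule.map_comp, hgm]

lemma good_congr' (hphi : ∀ x y, B (phi x) (phi y) = B' x y) {U U' : Submodule ℂ V'}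
    (h : Good B (Submodule.map (phi : V' →ₗ[ℂ] V) U) (Submodule.map (phi : V' →ₗ[ℂ] V) U')) :
    Good B' U U' := by
  obtain ⟨g, hgi, hgd, hgm⟩ := h
  refine ⟨phi.trans (g.trans phi.symm), fun x y => ?_, ?_, ?_⟩
  · simp only [LinearEquiv.trans_apply]
    rw [← hphi, LinearEquiv.apply_symm_apply, LinearEquiv.apply_symm_apply, hgi, hphi]
  · have hcoe : ((phi.trans (g.trans phi.symm)) : V' →ₗ[ℂ] V')
        = (phi.symm : V →ₗ[ℂ] V') ∘ₗ ((g : V →ₗ[ℂ] V) ∘ₗ ((phi.symm).symm : V' →ₗ[ℂ] V)) := by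
      rw [LinearEquiv.coe_trans, LinearEquiv.coe_trans, LinearMap.comp_assoc,
        LinearEquiv.symm_symm]
    rw [hcoe, LinearMap.det_conj, hgd]
  · have hcoe : ((phi.trans (g.trans phi.symm)) : V' →ₗ[ℂ] V')
        = ((phi.symm : V →ₗ[ℂ] V') ∘ₗ (g : V →ₗ[ℂ] V)) ∘ₗ (phi : V' →ₗ[ℂ] V) := by
      rw [LinearEquiv.coe_trans, LinearEquiv.coe_trans]
    rw [hcoe, Submodule.map_comp, Submodule.map_comp, hgm, map_symm_map]

lemma ok_congr (m : ℕ) (hphi : ∀ x y, B (phi x) (phi y) = B' x y) (h : Ok m B') : Ok m B := by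
  obtain ⟨U₁, U₂, ⟨h11, h12⟩, ⟨h21, h22⟩, hno, hall⟩ := h
  refine ⟨Submodule.map (phi : V' →ₗ[ℂ] V) U₁, Submodule.map (phi : V' →ₗ[ℂ] V) U₂,
    ⟨?_, ?_⟩, ⟨?_, ?_⟩, ?_, ?_⟩
  · rw [LinearEquiv.finrank_map_eq]; exact h11
  · rintro _ ⟨x, hx, rfl⟩ _ ⟨y, hy, rfl⟩
    simp only [LinearEquiv.coe_coe]
    rw [hphi]; exact h12 x hx y hy
  · rw [LinearEquiv.finrank_map_eq]; exact h21
  · rintro _ ⟨x, hx, rfl⟩ _ ⟨y, hy, rfl⟩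
    simp only [LinearEquiv.coe_coe]
    rw [hphi]; exact h22 x hx y hy
  · intro hg
    exact hno (good_congr' B B' phi hphi hg)
  · intro U hUm
    have hU' : finrank ℂ (Submodule.map (phi.symm : V →ₗ[ℂ] V') U) = m ∧
        ∀ u ∈ Submodule.map (phi.symm : V →ₗ[ℂ] V') U,
          ∀ v ∈ Submodule.map (phi.symm : V →ₗ[ℂ] V') U, B' u v = 0 := by
      constructor
      · rw [LinearEquiv.finrank_map_eq]; exact hUm.1
      · rintro _ ⟨x, hx, rfl⟩ _ ⟨y, hy, rfl⟩
        simp only [LinearEquiv.coe_coe]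
        rw [← hphi, LinearEquiv.apply_symm_apply, LinearEquiv.apply_symm_apply]
        exact hUm.2 x hx y hy
    have hback : Submodule.map (phi : V' →ₗ[ℂ] V)
        (Submodule.map (phi.symm : V →ₗ[ℂ] V') U) = U := by
      have := map_symm_map phi.symm U
      rwa [LinearEquiv.symm_symm] at this
    rcases hall _ hU' with h | h
    · left
      have := good_congr B B' phi hphi h
      rwa [hback] at this
    · right
      have := good_congr B B' phi hphi h
      rwa [hback] at this

end Transport

lemma polarize {V₁ V₂ : Type*} [AddCommGroup V₁] [Module ℂ V₁] [AddCommGroup V₂] [Module ℂ V₂]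
    (B₁ : LinearMap.BilinForm ℂ V₁) (B₂ : LinearMap.BilinForm ℂ V₂) (f : V₁ →ₗ[ℂ] V₂)
    (h1 : ∀ x, B₂ (f x) (f x) = B₁ x x) (s₁ : ∀ x y, B₁ x y = B₁ y x)
    (s₂ : ∀ x y, B₂ x y = B₂ y x) (x y : V₁) : B₂ (f x) (f y) = B₁ x y := by
  have h := h1 (x + y)
  simp only [map_add, LinearMap.add_apply] at h
  rw [h1 x, h1 y] at h
  linear_combination (h - s₂ (f y) (f x) + s₁ y x) / 2

lemma one_toBilin'_apply {κ : Type*} [Fintype κ] [DecidableEq κ] (x y : κ → ℂ) :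
    Matrix.toBilin' (1 : Matrix κ κ ℂ) x y = ∑ i, x i * y i := by
  rw [Matrix.toBilin'_apply']
  simp [Matrix.one_mulVec, dotProduct]

lemma one_toBilin'_symm {κ : Type*} [Fintype κ] [DecidableEq κ] (x y : κ → ℂ) :
    Matrix.toBilin' (1 : Matrix κ κ ℂ) x y = Matrix.toBilin' (1 : Matrix κ κ ℂ) y x := by
  rw [one_toBilin'_apply, one_toBilin'_apply]
  exact Finset.sum_congr rfl fun i _ => mul_comm _ _

def cK (m : ℕ) : (Fin m ⊕ Fin m) → Wt m :=
  Sum.elim (fun j => (Pi.single (inl j) 1 : Wt m) + Complex.I • (Pi.single (inr j) 1 : Wt m))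
    (fun j => (2⁻¹ : ℂ) • (Pi.single (inl j) 1 : Wt m)
      - (Complex.I * 2⁻¹) • (Pi.single (inr j) 1 : Wt m))

def Km (m : ℕ) : Matrix (Fin m ⊕ Fin m) (Fin m ⊕ Fin m) ℂ :=
  Matrix.of fun i k => cK m k i

lemma Km_gram : (Km m)ᵀ * 1 * Km m = Jm m := by
  ext a b
  rw [gram_entry]
  show Matrix.toBilin' 1 (cK m a) (cK m b) = Jm m a b
  have hsing : ∀ p q : Fin m ⊕ Fin m,
      Matrix.toBilin' (1 : Matrix (Fin m ⊕ Fin m) (Fin m ⊕ Fin m) ℂ)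
        (Pi.single p (1:ℂ)) (Pi.single q 1) = if p = q then 1 else 0 := by
    intro p q; rw [Matrix.toBilin'_single, Matrix.one_apply]
  rcases a with a | a <;> rcases b with b | b <;>
    simp only [cK, Sum.elim_inl, Sum.elim_inr, map_add, map_sub, _root_.map_smul,
      LinearMap.add_apply, LinearMap.sub_apply, LinearMap.smul_apply, smul_eq_mul, hsing,
      Jm_ll, Jm_lr, Jm_rl, Jm_rr, Sum.inl.injEq, Sum.inr.injEq, reduceCtorEq, if_false] <;>
    split_ifs <;>
    simp only [mul_one, mul_zero, add_zero, zero_add, sub_zero, zero_sub, mul_ite] <;>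
    ring_nf <;>
    simp [Complex.I_sq, Complex.I_mul_I] <;>
    ring_nf
  all_goals norm_num [Complex.I_sq]

lemma Km_det_ne : (Km m).det ≠ 0 := by
  have h1 := congrArg Matrix.det (Km_gram m)
  rw [Matrix.det_mul, Matrix.det_mul, Matrix.det_transpose, Matrix.det_one, mul_one] at h1
  intro h0
  rw [h0, mul_zero] at h1
  exact Jm_det_ne_zero m h1.symm

def kE (m : ℕ) : Wt m ≃ₗ[ℂ] Wt m :=
  (Km m).toLinearEquiv' ((Km m).invertibleOfIsUnitDet (isUnit_iff_ne_zero.2 (Km_det_ne m)))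

lemma kE_iso (x y : Wt m) :
    Matrix.toBilin' (1 : Matrix (Fin m ⊕ Fin m) (Fin m ⊕ Fin m) ℂ) (kE m x) (kE m y)
      = Bh m x y := by
  have hco : (kE m : Wt m →ₗ[ℂ] Wt m) = Matrix.toLin' (Km m) := Matrix.toLinearEquiv'_apply _ _
  have h : ((1 : Matrix (Fin m ⊕ Fin m) (Fin m ⊕ Fin m) ℂ).toBilin').comp
      (Matrix.toLin' (Km m)) (Matrix.toLin' (Km m)) = Bh m := by
    rw [Matrix.toBilin'_comp, Km_gram]; rfl
  have h2 := LinearMap.congr_fun (LinearMap.congr_fun h x) y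
  have hx : kE m x = Matrix.toLin' (Km m) x := by rw [← hco]; rfl
  have hy : kE m y = Matrix.toLin' (Km m) y := by rw [← hco]; rfl
  rw [hx, hy]
  simpa [LinearMap.BilinForm.comp_apply] using h2

theorem main (m : ℕ) (hm : 0 < m) (B : LinearMap.BilinForm ℂ (Fin (2 * m) → ℂ))
    (hsymm : ∀ v w, B v w = B w v) (hnd : ∀ v, (∀ w, B v w = 0) → v = 0) :
    Ok m B := by
  classical
  letI : Invertible (2 : ℂ) := invertibleOfNonzero two_ne_zero
  let Q : QuadraticForm ℂ (Fin (2 * m) → ℂ) := LinearMap.BilinMap.toQuadraticMap B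
  have hBsym : B.IsSymm := by constructor; intro x y; simpa using hsymm x y
  have hQB : QuadraticMap.associated (R := ℂ) Q = B :=
    QuadraticMap.associated_left_inverse ℂ hBsym.eq
  have hsep : (QuadraticMap.associated (R := ℂ) Q).SeparatingLeft := by
    rw [hQB]; exact hnd
  obtain ⟨θ⟩ := QuadraticForm.equivalent_sum_squares Q hsep
  let t := θ.toLinearEquiv
  have ht : ∀ a, B (t.symm a) (t.symm a) =
      Matrix.toBilin' (1 : Matrix (Fin (finrank ℂ (Fin (2 * m) → ℂ)))
        (Fin (finrank ℂ (Fin (2 * m) → ℂ))) ℂ) a a := by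
    intro a
    have h1 := θ.map_app (t.symm a)
    have h2 : θ (t.symm a) = a := by
      rw [show θ (t.symm a) = t (t.symm a) from
        (congrFun (QuadraticMap.IsometryEquiv.coe_toLinearEquiv θ) _).symm]
      exact t.apply_symm_apply a
    rw [h2] at h1
    have h3 : Q (t.symm a) = B (t.symm a) (t.symm a) :=
      LinearMap.BilinMap.toQuadraticMap_apply B _
    rw [one_toBilin'_apply, ← h3, ← h1]
    simp [QuadraticMap.weightedSumSquares_apply]
  have hB' : ∀ a b, B (t.symm a) (t.symm b)
      = Matrix.toBilin' (1 : Matrix (Fin (finrank ℂ (Fin (2 * m) → ℂ)))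
        (Fin (finrank ℂ (Fin (2 * m) → ℂ))) ℂ) a b :=
    fun a b => polarize _ B (t.symm : _ →ₗ[ℂ] (Fin (2 * m) → ℂ)) (fun x => ht x)
      (fun x y => one_toBilin'_symm x y) hsymm a b
  have hnr : finrank ℂ (Fin (2 * m) → ℂ) = m + m := by
    rw [Module.finrank_fintype_fun_eq_card, Fintype.card_fin]; ring
  let s0 : Fin (finrank ℂ (Fin (2 * m) → ℂ)) ≃ (Fin m ⊕ Fin m) :=
    (finCongr hnr).trans finSumFinEquiv.symm
  let rho : Wt m ≃ₗ[ℂ] (Fin (finrank ℂ (Fin (2 * m) → ℂ)) → ℂ) :=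
    LinearEquiv.funCongrLeft ℂ ℂ s0
  have hrho : ∀ x y : Wt m,
      Matrix.toBilin' (1 : Matrix (Fin (finrank ℂ (Fin (2 * m) → ℂ)))
        (Fin (finrank ℂ (Fin (2 * m) → ℂ))) ℂ) (rho x) (rho y)
        = Matrix.toBilin' (1 : Matrix (Fin m ⊕ Fin m) (Fin m ⊕ Fin m) ℂ) x y := by
    intro x y
    rw [one_toBilin'_apply, one_toBilin'_apply]
    exact Equiv.sum_comp s0 (fun k => x k * y k)
  let phi : Wt m ≃ₗ[ℂ] (Fin (2 * m) → ℂ) := (kE m).trans (rho.trans t.symm)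
  have hphi : ∀ x y, B (phi x) (phi y) = Bh m x y := by
    intro x y
    simp only [phi, LinearEquiv.trans_apply]
    rw [hB', hrho, kE_iso]
  exact ok_congr B (Bh m) phi m hphi (core m hm)

end

end TwoFamAux

open Module

/-- Let `B` be a nondegenerate symmetric bilinear form on `ℂⁿ`, with
`n = 2m` even (and positive). On the set of `m`-dimensional totally isotropic
subspaces, the relation "`U ~ U'` iff there is an isometry `g` of `B` with
`det g = 1` and `g(U) = U'`" has exactly two equivalence classes: there are two
inequivalent totally isotropic `m`-planes such that every totally isotropic
`m`-plane is equivalent to one of them. -/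
theorem two_families_of_maximal_isotropics (m : ℕ) (hm : 0 < m)
    (B : LinearMap.BilinForm ℂ (Fin (2 * m) → ℂ))
    (hsymm : ∀ v w, B v w = B w v)
    (hnd : ∀ v, (∀ w, B v w = 0) → v = 0) :
    ∃ U₁ U₂ : Submodule ℂ (Fin (2 * m) → ℂ),
      (finrank ℂ U₁ = m ∧ ∀ u ∈ U₁, ∀ v ∈ U₁, B u v = 0) ∧
      (finrank ℂ U₂ = m ∧ ∀ u ∈ U₂, ∀ v ∈ U₂, B u v = 0) ∧
      ¬ (∃ g : (Fin (2 * m) → ℂ) ≃ₗ[ℂ] (Fin (2 * m) → ℂ),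
            (∀ v w, B (g v) (g w) = B v w) ∧
            LinearMap.det (g : (Fin (2 * m) → ℂ) →ₗ[ℂ] (Fin (2 * m) → ℂ)) = 1 ∧
            Submodule.map (g : (Fin (2 * m) → ℂ) →ₗ[ℂ] (Fin (2 * m) → ℂ)) U₁ = U₂) ∧
      ∀ U : Submodule ℂ (Fin (2 * m) → ℂ),
        (finrank ℂ U = m ∧ ∀ u ∈ U, ∀ v ∈ U, B u v = 0) →
        (∃ g : (Fin (2 * m) → ℂ) ≃ₗ[ℂ] (Fin (2 * m) → ℂ),
            (∀ v w, B (g v) (g w) = B v w) ∧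
            LinearMap.det (g : (Fin (2 * m) → ℂ) →ₗ[ℂ] (Fin (2 * m) → ℂ)) = 1 ∧
            Submodule.map (g : (Fin (2 * m) → ℂ) →ₗ[ℂ] (Fin (2 * m) → ℂ)) U = U₁) ∨
        (∃ g : (Fin (2 * m) → ℂ) ≃ₗ[ℂ] (Fin (2 * m) → ℂ),
            (∀ v w, B (g v) (g w) = B v w) ∧
            LinearMap.det (g : (Fin (2 * m) → ℂ) →ₗ[ℂ] (Fin (2 * m) → ℂ)) = 1 ∧
            Submodule.map (g : (Fin (2 * m) → ℂ) →ₗ[ℂ] (Fin (2 * m) → ℂ)) U = U₂) := by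
  exact TwoFamAux.main m hm B hsymm hnd
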